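/- arXiv:2309.13033 — 2 statements merged into one kernel-verified Lean document; each statement's English description precedes it below -/
import Mathlib

section
/- Let M and N be symmetric real n×n matrices, let Γ be a symmetric positive definite n×n matrix, let S be a skew-symmetric n×n matrix, let Δ ≥ 1 and β = (Δ + 1/Δ)/2. Suppose the 2n×2n block matrix K with (1,1)-block −Γ, (1,2)-block (1/2)N + β·Γ + S, (2,1)-block ((1/2)N + β·Γ + S)ᵀ, and (2,2)-block M − Γ has negative definite quadratic form, i.e. zᵀKz < 0 for all nonzero z ∈ ℝ^{2n}. Then for every δ ∈ [1/Δ, Δ], the symmetric matrix M + δ·N is negative definite. -/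
open Matrix

/-- **S-procedure elimination of the uncertain scalar `δ ∈ [1/Δ, Δ]`.**
If the block matrix `K = [[-Γ, (1/2)N + β•Γ + S], [((1/2)N + β•Γ + S)ᵀ, M - Γ]]` has
negative definite quadratic form, then `M + δ • N` is negative definite for all
`δ ∈ [1/Δ, Δ]`. -/
theorem s_procedure_delta {n : ℕ} (M N Γ S : Matrix (Fin n) (Fin n) ℝ)
    (hM : M.IsSymm) (hN : N.IsSymm) (hΓsymm : Γ.IsSymm)
    (hΓpos : ∀ x : Fin n → ℝ, x ≠ 0 → 0 < x ⬝ᵥ Γ.mulVec x)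
    (hS : Sᵀ = -S) (Δ : ℝ) (hΔ : 1 ≤ Δ) (β : ℝ) (hβ : β = (Δ + 1/Δ)/2)
    (hK : ∀ z : Fin n ⊕ Fin n → ℝ, z ≠ 0 →
      z ⬝ᵥ (Matrix.fromBlocks (-Γ) ((1/2 : ℝ) • N + β • Γ + S)
        (((1/2 : ℝ) • N + β • Γ + S)ᵀ) (M - Γ)).mulVec z < 0) :
    ∀ δ : ℝ, δ ∈ Set.Icc (1/Δ) Δ →
      ∀ x : Fin n → ℝ, x ≠ 0 → x ⬝ᵥ (M + δ • N).mulVec x < 0 := by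
  intro δ hδ x hx
  have hΔ0 : (0:ℝ) < Δ := lt_of_lt_of_le one_pos hΔ
  have hΔinv : Δ * (1/Δ) = 1 := by field_simp
  -- transpose quadratic form
  have key : ∀ A : Matrix (Fin n) (Fin n) ℝ, x ⬝ᵥ Aᵀ.mulVec x = x ⬝ᵥ A.mulVec x := by
    intro A
    rw [dotProduct_mulVec, vecMul_transpose, dotProduct_comm]
  have hSx : x ⬝ᵥ S.mulVec x = 0 := by
    have h1 := key S
    rw [hS, neg_mulVec, dotProduct_neg] at h1
    linarith
  set z : Fin n ⊕ Fin n → ℝ := Sum.elim (δ • x) x with hzdef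
  have hz : z ≠ 0 := by
    intro h
    apply hx
    funext i
    have := congrFun h (Sum.inr i)
    simpa [hzdef] using this
  have hKz := hK z hz
  rw [hzdef, fromBlocks_mulVec, sumElim_dotProduct_sumElim] at hKz
  have hNt : Nᵀ = N := hN
  have hΓt : Γᵀ = Γ := hΓsymm
  simp only [transpose_add, transpose_smul, hNt, hΓt, hS, add_mulVec, sub_mulVec,
    neg_mulVec, smul_mulVec, mulVec_smul, dotProduct_add, dotProduct_sub,
    Sum.elim_comp_inl, Sum.elim_comp_inr,
    dotProduct_neg, dotProduct_smul, smul_dotProduct, smul_eq_mul, hSx] at hKz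
  have hq : 0 < x ⬝ᵥ Γ.mulVec x := hΓpos x hx
  have hprod : 0 ≤ (Δ - δ) * (δ - 1/Δ) :=
    mul_nonneg (by linarith [hδ.2]) (by linarith [hδ.1])
  have hprodq : 0 ≤ (Δ - δ) * (δ - 1/Δ) * (x ⬝ᵥ Γ.mulVec x) := mul_nonneg hprod hq.le
  have hgoal : x ⬝ᵥ (M + δ • N).mulVec x = x ⬝ᵥ M.mulVec x + δ * (x ⬝ᵥ N.mulVec x) := by
    simp [add_mulVec, smul_mulVec, dotProduct_add, dotProduct_smul]
  rw [hgoal]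
  subst hβ
  nlinarith [hKz, hprodq, hΔinv, hq]
end

section
/- Let Q₁₁ and Q₂₂ be symmetric real n×n matrices, let Q₁₂ be an arbitrary real n×n matrix, and let Ψ be a symmetric positive definite n×n matrix. Suppose the 2n×2n block matrix K with (1,1)-block Q₁₁ − Ψ, (1,2)-block Q₁₂ + (1/2)Ψ, (2,1)-block (Q₁₂ + (1/2)Ψ)ᵀ, and (2,2)-block Q₂₂ has negative definite quadratic form, i.e. zᵀKz < 0 for all nonzero z ∈ ℝ^{2n}. Then for every α ∈ [0,1], the symmetric matrix α²·Q₁₁ + α·(Q₁₂ + Q₁₂ᵀ) + Q₂₂ is negative definite. -/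
open Matrix

lemma dot_transpose_mulVec {n : ℕ} (A : Matrix (Fin n) (Fin n) ℝ) (x : Fin n → ℝ) :
    x ⬝ᵥ Aᵀ.mulVec x = x ⬝ᵥ A.mulVec x := by
  rw [Matrix.mulVec_transpose, dotProduct_comm, Matrix.dotProduct_mulVec]

/-- **S-procedure over the interpolation variable `α ∈ [0,1]`.**
If the block matrix `K = [[Q₁₁ - Ψ, Q₁₂ + (1/2)Ψ], [(Q₁₂ + (1/2)Ψ)ᵀ, Q₂₂]]` has negative
definite quadratic form, then `α² Q₁₁ + α (Q₁₂ + Q₁₂ᵀ) + Q₂₂` is negative definite for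
every `α ∈ [0,1]`. -/
theorem s_procedure_alpha {n : ℕ} (Q₁₁ Q₂₂ Q₁₂ Ψ : Matrix (Fin n) (Fin n) ℝ)
    (hQ₁₁ : Q₁₁.IsSymm) (hQ₂₂ : Q₂₂.IsSymm) (hΨsymm : Ψ.IsSymm)
    (hΨpos : ∀ x : Fin n → ℝ, x ≠ 0 → 0 < x ⬝ᵥ Ψ.mulVec x)
    (hK : ∀ z : Fin n ⊕ Fin n → ℝ, z ≠ 0 →
      z ⬝ᵥ (Matrix.fromBlocks (Q₁₁ - Ψ) (Q₁₂ + (1/2 : ℝ) • Ψ)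
        ((Q₁₂ + (1/2 : ℝ) • Ψ)ᵀ) Q₂₂).mulVec z < 0) :
    ∀ α : ℝ, α ∈ Set.Icc (0 : ℝ) 1 →
      ∀ x : Fin n → ℝ, x ≠ 0 →
        x ⬝ᵥ ((α ^ 2) • Q₁₁ + α • (Q₁₂ + Q₁₂ᵀ) + Q₂₂).mulVec x < 0 := by
  intro α hα x hx
  obtain ⟨hα0, hα1⟩ := hα
  set z : Fin n ⊕ Fin n → ℝ := Sum.elim (α • x) x with hz
  have hzne : z ≠ 0 := by
    intro h
    apply hx
    funext i
    have := congrFun h (Sum.inr i)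
    simpa [hz] using this
  have hKz := hK z hzne
  rw [hz, Matrix.fromBlocks_mulVec, sumElim_dotProduct_sumElim] at hKz
  have hT := dot_transpose_mulVec Q₁₂ x
  have hTΨ := dot_transpose_mulVec Ψ x
  have hΨx := hΨpos x hx
  have hcoef : 0 ≤ α - α ^ 2 := by nlinarith
  simp only [Matrix.mulVec_add, Matrix.sub_mulVec, Matrix.add_mulVec, Matrix.mulVec_smul,
    Matrix.smul_mulVec, Sum.elim_comp_inl, Sum.elim_comp_inr, Matrix.transpose_add, Matrix.transpose_smul,
    dotProduct_add, dotProduct_sub, dotProduct_smul,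
    smul_dotProduct, smul_eq_mul] at hKz ⊢
  nlinarith [mul_nonneg hcoef (le_of_lt hΨx)]
end
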